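/- arXiv:1906.05153 — 2 statements merged into one kernel-verified Lean document; each statement's English description precedes it below -/
import Mathlib

section
/- Let g(x) = arccos(1−x) − (1−x)√(1−(1−x)²) for x ∈ [0,2]. Then for all x ∈ [0,2], x^{3/2} ≤ g(x) ≤ 2·x^{3/2}, where at x = 0 both sides vanish. -/
open Real

noncomputable def gfun (x : ℝ) : ℝ := Real.arccos (1 - x) - (1 - x) * Real.sqrt (1 - (1 - x) ^ 2)

lemma gfun_hasDerivAt {x : ℝ} (hx : x ∈ Set.Ioo (0:ℝ) 2) :
    HasDerivAt gfun (2 * Real.sqrt (x * (2 - x))) x := by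
  obtain ⟨h0, h2⟩ := hx
  have hD : 1 - (1 - x) ^ 2 = x * (2 - x) := by ring
  have hDpos : 0 < x * (2 - x) := by nlinarith
  have hs : 0 < Real.sqrt (x * (2 - x)) := Real.sqrt_pos.2 hDpos
  have hssq : Real.sqrt (x * (2 - x)) ^ 2 = x * (2 - x) := Real.sq_sqrt hDpos.le
  have hu : HasDerivAt (fun y : ℝ => 1 - y) (-1) x := by
    simpa using (hasDerivAt_id x).const_sub 1
  have h1 : (1 - x) ≠ -1 := by intro h; linarith
  have h1' : (1 - x) ≠ 1 := by intro h; linarith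
  have ha : HasDerivAt (fun y => Real.arccos (1 - y))
      (-(1 / Real.sqrt (1 - (1 - x) ^ 2)) * (-1)) x :=
    (Real.hasDerivAt_arccos h1 h1').comp x hu
  have hw : HasDerivAt (fun y : ℝ => 1 - (1 - y) ^ 2) (-(2 * (1 - x) ^ 1 * (-1))) x :=
    (hu.pow 2).const_sub 1
  have hw0 : (1 - (1 - x) ^ 2) ≠ 0 := by rw [hD]; exact hDpos.ne'
  have hsq : HasDerivAt (fun y => Real.sqrt (1 - (1 - y) ^ 2))
      (1 / (2 * Real.sqrt (1 - (1 - x) ^ 2)) * (-(2 * (1 - x) ^ 1 * (-1)))) x :=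
    (Real.hasDerivAt_sqrt hw0).comp x hw
  have hfull := ha.sub (hu.mul hsq)
  refine HasDerivAt.congr_deriv (f := gfun) hfull ?_
  symm
  rw [hD]
  have hsne : Real.sqrt (x * (2 - x)) ≠ 0 := hs.ne'
  have hm : Real.sqrt x * Real.sqrt (2 - x) = Real.sqrt (x * (2 - x)) :=
    (Real.sqrt_mul h0.le _).symm
  have hmpos : 0 < Real.sqrt x * Real.sqrt (2 - x) := by rw [hm]; exact hs
  have hm2 : (Real.sqrt x * Real.sqrt (2 - x)) ^ 2 = x * (2 - x) := by
    rw [hm]; exact hssq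
  field_simp
  nlinarith [hm2, hmpos]

lemma rpow_hasDerivAt (x : ℝ) :
    HasDerivAt (fun y : ℝ => y ^ ((3 : ℝ) / 2)) ((3 / 2) * Real.sqrt x) x := by
  have h := Real.hasDerivAt_rpow_const (x := x) (p := (3 : ℝ) / 2) (Or.inr (by norm_num))
  convert h using 1
  rw [show (3 : ℝ) / 2 - 1 = 1 / 2 by norm_num, ← Real.sqrt_eq_rpow]

lemma gfun_continuous : Continuous gfun := by
  unfold gfun
  have h1 : Continuous fun x : ℝ => Real.arccos (1 - x) :=
    Real.continuous_arccos.comp (by continuity)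
  have h2 : Continuous fun x : ℝ => (1 - x) * Real.sqrt (1 - (1 - x) ^ 2) := by
    apply Continuous.mul (by continuity)
    exact Real.continuous_sqrt.comp (by continuity)
  exact h1.sub h2

lemma rpow_cont : Continuous fun y : ℝ => y ^ ((3 : ℝ) / 2) := by
  rw [continuous_iff_continuousAt]
  intro x
  exact Real.continuousAt_rpow_const x _ (Or.inr (by norm_num))

lemma gfun_zero : gfun 0 = 0 := by simp [gfun, Real.arccos_one]

lemma gfun_two : gfun 2 = Real.pi := by
  have : (1 : ℝ) - (1 - 2) ^ 2 = 0 := by norm_num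
  norm_num [gfun, this, Real.arccos_neg_one]

lemma upper_bd : ∀ x ∈ Set.Icc (0 : ℝ) 2, gfun x ≤ 2 * x ^ ((3 : ℝ) / 2) := by
  set h : ℝ → ℝ := fun y => 2 * y ^ ((3 : ℝ) / 2) - gfun y with hh
  have hmono : StrictMonoOn h (Set.Icc (0 : ℝ) 2) := by
    apply strictMonoOn_of_deriv_pos (convex_Icc 0 2)
    · exact (((continuous_const.mul rpow_cont)).sub gfun_continuous).continuousOn
    · intro x hx
      rw [interior_Icc] at hx
      obtain ⟨h0, h2⟩ := hx
      have hd : HasDerivAt h (2 * ((3 / 2) * Real.sqrt x) - 2 * Real.sqrt (x * (2 - x))) x :=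
        ((rpow_hasDerivAt x).const_mul 2).sub (gfun_hasDerivAt ⟨h0, h2⟩)
      rw [hd.deriv, Real.sqrt_mul h0.le]
      have ha : 0 < Real.sqrt x := Real.sqrt_pos.2 h0
      have hb : Real.sqrt (2 - x) ^ 2 = 2 - x := Real.sq_sqrt (by linarith)
      have hbn : 0 ≤ Real.sqrt (2 - x) := Real.sqrt_nonneg _
      nlinarith [sq_nonneg (Real.sqrt (2 - x) - 3 / 2)]
  intro x hx
  have h0 : h 0 = 0 := by
    simp [hh, gfun_zero, Real.zero_rpow (by norm_num : ((3 : ℝ) / 2) ≠ 0)]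
  rcases eq_or_lt_of_le hx.1 with h | h
  · rw [← h]; simp [gfun_zero, Real.zero_rpow (by norm_num : ((3 : ℝ) / 2) ≠ 0)]
  · have := hmono (Set.left_mem_Icc.2 (by norm_num)) hx h
    rw [h0] at this
    simp only [hh] at this
    linarith

lemma lower_bd : ∀ x ∈ Set.Icc (0 : ℝ) 2, x ^ ((3 : ℝ) / 2) ≤ gfun x := by
  set p : ℝ → ℝ := fun y => gfun y - y ^ ((3 : ℝ) / 2) with hp
  have hpc : Continuous p := gfun_continuous.sub rpow_cont
  have hderiv : ∀ x ∈ Set.Ioo (0 : ℝ) 2,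
      deriv p x = 2 * (Real.sqrt x * Real.sqrt (2 - x)) - (3 / 2) * Real.sqrt x := by
    intro x hx
    have hd : HasDerivAt p (2 * Real.sqrt (x * (2 - x)) - (3 / 2) * Real.sqrt x) x :=
      (gfun_hasDerivAt hx).sub (rpow_hasDerivAt x)
    rw [hd.deriv, Real.sqrt_mul hx.1.le]
  have hmono : StrictMonoOn p (Set.Icc (0 : ℝ) (23 / 16)) := by
    apply strictMonoOn_of_deriv_pos (convex_Icc _ _) hpc.continuousOn
    intro x hx
    rw [interior_Icc] at hx
    obtain ⟨h0, h2⟩ := hx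
    rw [hderiv x ⟨h0, by linarith⟩]
    have ha : 0 < Real.sqrt x := Real.sqrt_pos.2 h0
    have hb : Real.sqrt (2 - x) ^ 2 = 2 - x := Real.sq_sqrt (by linarith)
    have hbn : 0 ≤ Real.sqrt (2 - x) := Real.sqrt_nonneg _
    nlinarith [sq_nonneg (Real.sqrt (2 - x) - 3 / 4)]
  have hanti : StrictAntiOn p (Set.Icc ((23 : ℝ) / 16) 2) := by
    apply strictAntiOn_of_deriv_neg (convex_Icc _ _) hpc.continuousOn
    intro x hx
    rw [interior_Icc] at hx
    obtain ⟨h0, h2⟩ := hx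
    rw [hderiv x ⟨by linarith, h2⟩]
    have ha : 0 < Real.sqrt x := Real.sqrt_pos.2 (by linarith)
    have hb : Real.sqrt (2 - x) ^ 2 = 2 - x := Real.sq_sqrt (by linarith)
    have hbn : 0 ≤ Real.sqrt (2 - x) := Real.sqrt_nonneg _
    have hblt : Real.sqrt (2 - x) < 3 / 4 := by nlinarith
    nlinarith
  have hp0 : p 0 = 0 := by
    simp [hp, gfun_zero, Real.zero_rpow (by norm_num : ((3 : ℝ) / 2) ≠ 0)]
  have hp2 : 0 ≤ p 2 := by
    have h23 : (2 : ℝ) ^ ((3 : ℝ) / 2) = 2 * Real.sqrt 2 := by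
      rw [show (3 : ℝ) / 2 = 1 + 1 / 2 by norm_num,
        Real.rpow_add (by norm_num), Real.rpow_one, ← Real.sqrt_eq_rpow]
    have hs2 : Real.sqrt 2 < 3 / 2 := by
      nlinarith [Real.sq_sqrt (by norm_num : (0:ℝ) ≤ 2), Real.sqrt_nonneg 2]
    simp only [hp, gfun_two, h23]
    nlinarith [Real.pi_gt_three]
  intro x hx
  have key : 0 ≤ p x := by
    rcases le_or_gt x (23 / 16) with hc | hc
    · rcases eq_or_lt_of_le hx.1 with h | h
      · rw [← h, hp0]
      · have := hmono (Set.mem_Icc.2 ⟨le_refl 0, by norm_num⟩)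
          (Set.mem_Icc.2 ⟨hx.1, hc⟩) h
        rw [hp0] at this; linarith
    · rcases eq_or_lt_of_le hx.2 with h | h
      · rw [h]; exact hp2
      · have := hanti (Set.mem_Icc.2 ⟨hc.le, hx.2⟩)
          (Set.mem_Icc.2 ⟨by norm_num, le_refl 2⟩) h
        linarith
  simp only [hp] at key
  linarith

/-- For `g(x) = arccos(1-x) - (1-x)√(1-(1-x)²)` (the area of a circular segment of depth `x`
of the unit circle): `x^(3/2) ≤ g(x) ≤ 2 x^(3/2)` for all `x ∈ [0,2]`. -/
theorem stmt_12 :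
    ∀ x ∈ Set.Icc (0 : ℝ) 2,
      x ^ ((3 : ℝ) / 2) ≤ Real.arccos (1 - x) - (1 - x) * Real.sqrt (1 - (1 - x) ^ 2) ∧
      Real.arccos (1 - x) - (1 - x) * Real.sqrt (1 - (1 - x) ^ 2) ≤ 2 * x ^ ((3 : ℝ) / 2) := by
  intro x hx
  exact ⟨lower_bd x hx, upper_bd x hx⟩
end

section
/- Let h(w) = ∫₀^w e^{i2πx/λ} φ(x) dx where φ: [0,W] → ℝ is positive, continuously differentiable, and satisfies φ(x) − φ(x + λ/2) ≥ δ > 0 for all x with x + λ/2 ≤ W, where W is an integer multiple of λ. Then Im(h(W)) ≥ (δ/π)·λ·(W/λ) > 0; in particular Im(h(W)) > 0. -/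
open Real Complex

/-- If `φ > 0` is `C¹` on `[0,W]` with `W = k·λ` a positive integer multiple of the
wavelength, and `φ(x) - φ(x+λ/2) ≥ δ > 0` whenever both points lie in `[0,W]`, then
`Im ∫₀^W e^{i2πx/λ} φ(x) dx ≥ (δ/π)·λ·(W/λ) > 0`. -/
theorem stmt_16 (lam δ : ℝ) (k : ℕ) (φ : ℝ → ℝ)
    (hlam : 0 < lam) (hδ : 0 < δ) (hk : 1 ≤ k)
    (hpos : ∀ x ∈ Set.Icc (0 : ℝ) ((k : ℝ) * lam), 0 < φ x)
    (hC1 : ContDiffOn ℝ 1 φ (Set.Icc (0 : ℝ) ((k : ℝ) * lam)))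
    (hdrop : ∀ x : ℝ, 0 ≤ x → x + lam / 2 ≤ (k : ℝ) * lam → δ ≤ φ x - φ (x + lam / 2)) :
    (δ / π) * lam * (((k : ℝ) * lam) / lam) ≤
      (∫ x in (0 : ℝ)..((k : ℝ) * lam),
        Complex.exp (Complex.I * (2 * π * x / lam)) * (φ x : ℂ)).im ∧
    0 < (∫ x in (0 : ℝ)..((k : ℝ) * lam),
        Complex.exp (Complex.I * (2 * π * x / lam)) * (φ x : ℂ)).im := by
  have hπ : (0:ℝ) < π := Real.pi_pos
  have hlam0 : lam ≠ 0 := ne_of_gt hlam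
  have hkpos : (0:ℝ) < (k:ℝ) := by exact_mod_cast Nat.lt_of_lt_of_le Nat.zero_lt_one hk
  set W : ℝ := (k : ℝ) * lam with hWdef
  have hWpos : 0 < W := mul_pos hkpos hlam
  set s : ℝ → ℝ := fun x => Real.sin (2 * π * x / lam) with hs
  have hsC : Continuous s := by
    apply Real.continuous_sin.comp; fun_prop
  have hφc : ContinuousOn φ (Set.Icc 0 W) := hC1.continuousOn
  -- interval integrability of s·φ on subintervals of [0,W]
  have hIW : ∀ u v : ℝ, 0 ≤ u → u ≤ v → v ≤ W →
      IntervalIntegrable (fun x => s x * φ x) MeasureTheory.volume u v := by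
    intro u v hu huv hv
    apply ContinuousOn.intervalIntegrable
    rw [Set.uIcc_of_le huv]
    exact hsC.continuousOn.mul (hφc.mono (Set.Icc_subset_Icc hu hv))
  -- integrability of shifted products on [0, lam/2]
  have hshift : ∀ c : ℝ, 0 ≤ c → lam / 2 + c ≤ W →
      IntervalIntegrable (fun x => s x * φ (x + c)) MeasureTheory.volume 0 (lam/2) := by
    intro c hc hcW
    apply ContinuousOn.intervalIntegrable
    rw [Set.uIcc_of_le (by linarith : (0:ℝ) ≤ lam/2)]
    refine hsC.continuousOn.mul (hφc.comp (by fun_prop) ?_)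
    intro x hx
    have h1 : (0:ℝ) ≤ x := hx.1
    have h2 : x ≤ lam/2 := hx.2
    show x + c ∈ Set.Icc (0:ℝ) W
    exact ⟨by linarith, by linarith⟩
  -- the imaginary part equals the real integral of sin · φ
  have hF : (∫ x in (0 : ℝ)..W,
        Complex.exp (Complex.I * (2 * π * x / lam)) * (φ x : ℂ)).im
      = ∫ x in (0:ℝ)..W, s x * φ x := by
    have hint : IntervalIntegrable
        (fun x : ℝ => Complex.exp (Complex.I * (2 * π * x / lam)) * (φ x : ℂ))
        MeasureTheory.volume 0 W := by
      apply ContinuousOn.intervalIntegrable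
      rw [Set.uIcc_of_le hWpos.le]
      exact (Continuous.continuousOn (by fun_prop)).mul
        (Complex.continuous_ofReal.comp_continuousOn hφc)
    have h3 := Complex.imCLM.intervalIntegral_comp_comm hint
    calc (∫ x in (0 : ℝ)..W, Complex.exp (Complex.I * (2 * π * x / lam)) * (φ x : ℂ)).im
        = Complex.imCLM (∫ x in (0 : ℝ)..W,
            Complex.exp (Complex.I * (2 * π * x / lam)) * (φ x : ℂ)) := rfl
      _ = ∫ x in (0:ℝ)..W,
            Complex.imCLM (Complex.exp (Complex.I * (2 * π * x / lam)) * (φ x : ℂ)) := h3.symm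
      _ = ∫ x in (0:ℝ)..W, s x * φ x := by
          apply intervalIntegral.integral_congr
          intro x _
          show (Complex.exp (Complex.I * (2 * π * x / lam)) * (φ x : ℂ)).im = s x * φ x
          have h1 : (Complex.I * (2 * π * (x:ℂ) / lam)) = ((2*π*x/lam : ℝ) : ℂ) * Complex.I := by
            push_cast; ring
          rw [h1, Complex.mul_im, Complex.exp_ofReal_mul_I_re, Complex.exp_ofReal_mul_I_im]
          simp only [Complex.ofReal_im, Complex.ofReal_re, mul_zero, zero_add, hs]
  -- ∫₀^{λ/2} sin(2πx/λ) = λ/π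
  have key : (∫ x in (0:ℝ)..(lam/2), s x) = lam / π := by
    have h2 : ∀ x : ℝ, s x = Real.sin ((2*π/lam) * x) := by
      intro x; simp only [hs]; ring_nf
    have hc : (2*π/lam) ≠ 0 := by positivity
    calc (∫ x in (0:ℝ)..(lam/2), s x)
        = ∫ x in (0:ℝ)..(lam/2), Real.sin ((2*π/lam) * x) :=
          intervalIntegral.integral_congr (fun x _ => h2 x)
      _ = (2*π/lam)⁻¹ • ∫ x in ((2*π/lam) * 0)..((2*π/lam) * (lam/2)), Real.sin x :=
          intervalIntegral.integral_comp_mul_left Real.sin hc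
      _ = lam / π := by
          rw [mul_zero, show (2*π/lam) * (lam/2) = π by field_simp,
            integral_sin, Real.cos_zero, Real.cos_pi]
          field_simp
          rw [smul_eq_mul]; field_simp; ring
  -- per-period lower bound
  have per : ∀ j : ℕ, j < k →
      δ * (lam / π) ≤ ∫ x in ((j:ℝ)*lam)..(((j:ℝ)+1)*lam), s x * φ x := by
    intro j hj
    have hj1 : (j:ℝ) + 1 ≤ (k:ℝ) := by exact_mod_cast Nat.succ_le_of_lt hj
    have hjnn : (0:ℝ) ≤ (j:ℝ) := Nat.cast_nonneg j
    set a : ℝ := (j:ℝ) * lam with ha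
    have hanon : 0 ≤ a := mul_nonneg hjnn hlam.le
    have haW : a + lam ≤ W := by
      have h4 : ((j:ℝ)+1) * lam ≤ (k:ℝ) * lam := by nlinarith
      rw [hWdef]; nlinarith
    -- the two shift identities for s
    have hs1 : ∀ x : ℝ, s (x + a) = s x := by
      intro x
      simp only [hs, ha]
      rw [show 2*π*(x + (j:ℝ)*lam)/lam = 2*π*x/lam + (j:ℝ)*(2*π) by field_simp]
      exact Real.sin_add_nat_mul_two_pi _ j
    have hs2 : ∀ x : ℝ, s (x + (a + lam/2)) = - s x := by
      intro x
      simp only [hs, ha]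
      rw [show 2*π*(x + ((j:ℝ)*lam + lam/2))/lam = (2*π*x/lam + π) + (j:ℝ)*(2*π) by
        field_simp; ring]
      rw [Real.sin_add_nat_mul_two_pi, Real.sin_add_pi]
    -- first half
    have e1 : (∫ x in a..(a + lam/2), s x * φ x)
        = ∫ x in (0:ℝ)..(lam/2), s x * φ (x + a) := by
      rw [show (∫ x in (0:ℝ)..(lam/2), s x * φ (x + a))
          = ∫ x in (0:ℝ)..(lam/2), (fun y => s y * φ y) (x + a) from
        intervalIntegral.integral_congr (fun x _ => by simp [hs1 x])]
      rw [intervalIntegral.integral_comp_add_right (fun y => s y * φ y) a]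
      rw [zero_add, add_comm (lam/2) a]
    -- second half
    have e2 : (∫ x in (a + lam/2)..(a + lam), s x * φ x)
        = - ∫ x in (0:ℝ)..(lam/2), s x * φ (x + (a + lam/2)) := by
      rw [show (∫ x in (0:ℝ)..(lam/2), s x * φ (x + (a + lam/2)))
          = ∫ x in (0:ℝ)..(lam/2), - ((fun y => s y * φ y) (x + (a + lam/2))) from
        intervalIntegral.integral_congr (fun x _ => by simp [hs2 x])]
      rw [intervalIntegral.integral_neg, neg_neg,
        intervalIntegral.integral_comp_add_right (fun y => s y * φ y) (a + lam/2)]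
      rw [zero_add, show lam/2 + (a + lam/2) = a + lam by ring]
    -- combine
    have hsplit : (∫ x in a..(((j:ℝ)+1)*lam), s x * φ x)
        = (∫ x in a..(a + lam/2), s x * φ x) + ∫ x in (a + lam/2)..(a + lam), s x * φ x := by
      rw [intervalIntegral.integral_add_adjacent_intervals
        (hIW a (a + lam/2) hanon (by linarith) (by linarith))
        (hIW (a + lam/2) (a + lam) (by linarith) (by linarith) haW)]
      congr 1
      rw [ha]; ring
    have hint1 : IntervalIntegrable (fun x => s x * φ (x + a)) MeasureTheory.volume 0 (lam/2) :=
      hshift a hanon (by linarith)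
    have hint2 : IntervalIntegrable (fun x => s x * φ (x + (a + lam/2)))
        MeasureTheory.volume 0 (lam/2) := hshift (a + lam/2) (by linarith) (by linarith)
    have hint2' : IntervalIntegrable (fun x => s x * φ (x + a + lam/2))
        MeasureTheory.volume 0 (lam/2) := by
      simpa [add_assoc] using hint2
    have hintd : IntervalIntegrable (fun x => s x * (φ (x + a) - φ (x + a + lam/2)))
        MeasureTheory.volume 0 (lam/2) := by
      have heq : (fun x => s x * (φ (x + a) - φ (x + a + lam/2)))
          = fun x => s x * φ (x + a) - s x * φ (x + a + lam/2) := by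
        funext x; ring
      rw [heq]
      exact hint1.sub hint2'
    have ecomb : (∫ x in a..(((j:ℝ)+1)*lam), s x * φ x)
        = ∫ x in (0:ℝ)..(lam/2), s x * (φ (x + a) - φ (x + a + lam/2)) := by
      rw [hsplit, e1, e2, ← sub_eq_add_neg, ← intervalIntegral.integral_sub hint1 hint2]
      apply intervalIntegral.integral_congr
      intro x _
      simp only [show ∀ y : ℝ, y + (a + lam/2) = y + a + lam/2 from fun y => by ring]
      ring
    rw [ecomb]
    -- lower bound by δ · ∫ s
    have hmono : (∫ x in (0:ℝ)..(lam/2), s x * δ)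
        ≤ ∫ x in (0:ℝ)..(lam/2), s x * (φ (x + a) - φ (x + a + lam/2)) := by
      apply intervalIntegral.integral_mono_on (by linarith) _ hintd
      · intro x hx
        have hx1 : (0:ℝ) ≤ x := hx.1
        have hx2 : x ≤ lam/2 := hx.2
        have hsx : 0 ≤ s x := by
          apply Real.sin_nonneg_of_nonneg_of_le_pi
          · apply div_nonneg _ hlam.le
            nlinarith
          · rw [div_le_iff₀ hlam]
            nlinarith
        have hd : δ ≤ φ (x + a) - φ (x + a + lam/2) := by
          apply hdrop (x + a) (by linarith)
          rw [hWdef]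
          calc x + a + lam/2 ≤ a + lam := by linarith
            _ ≤ (k:ℝ) * lam := by rw [← hWdef]; exact haW
        exact mul_le_mul_of_nonneg_left hd hsx
      · exact (hsC.continuousOn.mul continuousOn_const).intervalIntegrable
    calc δ * (lam / π) = (∫ x in (0:ℝ)..(lam/2), s x) * δ := by rw [key]; ring
      _ = ∫ x in (0:ℝ)..(lam/2), s x * δ := (intervalIntegral.integral_mul_const δ s).symm
      _ ≤ _ := hmono
  -- sum over periods
  have hadj : ∀ i, i < k → IntervalIntegrable (fun x => s x * φ x) MeasureTheory.volume
      ((fun i : ℕ => (i:ℝ) * lam) i) ((fun i : ℕ => (i:ℝ) * lam) (i+1)) := by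
    intro i hi
    have hi1 : (i:ℝ) + 1 ≤ (k:ℝ) := by exact_mod_cast Nat.succ_le_of_lt hi
    have hinn : (0:ℝ) ≤ (i:ℝ) := Nat.cast_nonneg i
    simp only []
    push_cast
    apply hIW
    · positivity
    · nlinarith
    · rw [hWdef]; nlinarith
  have hsum : (∫ x in (0:ℝ)..W, s x * φ x)
      = ∑ j ∈ Finset.range k, ∫ x in ((j:ℝ)*lam)..(((j:ℝ)+1)*lam), s x * φ x := by
    have h := intervalIntegral.sum_integral_adjacent_intervals hadj
    simp only [Nat.cast_zero, zero_mul] at h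
    push_cast at h
    rw [hWdef]
    exact h.symm
  have hbound : (k:ℝ) * (δ * (lam / π)) ≤ ∫ x in (0:ℝ)..W, s x * φ x := by
    rw [hsum]
    calc (k:ℝ) * (δ * (lam / π))
        = ∑ _j ∈ Finset.range k, δ * (lam / π) := by
          rw [Finset.sum_const, Finset.card_range]; push_cast; ring
      _ ≤ ∑ j ∈ Finset.range k, ∫ x in ((j:ℝ)*lam)..(((j:ℝ)+1)*lam), s x * φ x :=
          Finset.sum_le_sum (fun j hj => per j (Finset.mem_range.mp hj))
  have hLHS : (δ / π) * lam * (W / lam) = (k:ℝ) * (δ * (lam / π)) := by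
    rw [hWdef]
    field_simp
  constructor
  · rw [hF, hLHS]; exact hbound
  · rw [hF]
    have hp : (0:ℝ) < (k:ℝ) * (δ * (lam / π)) := by positivity
    linarith
end
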